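/- Let A ⊆ ℝ^d be a compact convex set with positive volume. Then for every coordinate j ∈ {1,…,d}, the j-th centroid coordinate satisfies (1/(d+1))·M_j(A) + (d/(d+1))·m_j(A) ≤ centroid_j(A) ≤ (1/(d+1))·m_j(A) + (d/(d+1))·M_j(A), where m_j(A) = min_{x∈A} x_j and M_j(A) = max_{x∈A} x_j. -/

import Mathlib

open MeasureTheory Set

lemma key_centroid (d : ℕ) (A : Set (Fin d → ℝ))
    (hcomp : IsCompact A) (hconv : Convex ℝ A) (hne : A.Nonempty)
    (φ : (Fin d → ℝ) →L[ℝ] ℝ)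
    (hnull : ∀ c : ℝ, volume {x : Fin d → ℝ | φ x = c} = 0) :
    (volume A).toReal * ((sSup (φ '' A) - sInf (φ '' A)) / ((d : ℝ) + 1))
      ≤ ∫ x in A, (φ x - sInf (φ '' A)) := by
  set m := sInf (φ '' A) with hm
  set M := sSup (φ '' A) with hM
  have hAm : MeasurableSet A := hcomp.isClosed.measurableSet
  have hfin : volume A < ⊤ := hcomp.measure_lt_top
  have himg : IsCompact (φ '' A) := hcomp.image φ.continuous
  have himgne : (φ '' A).Nonempty := hne.image φ
  have hble : ∀ x ∈ A, m ≤ φ x := fun x hx => csInf_le himg.bddBelow ⟨x, hx, rfl⟩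
  have hbleM : ∀ x ∈ A, φ x ≤ M := fun x hx => le_csSup himg.bddAbove ⟨x, hx, rfl⟩
  have hmM : m ≤ M := by
    obtain ⟨y, hy⟩ := himgne
    obtain ⟨x, hx, rfl⟩ := hy
    exact le_trans (hble x hx) (hbleM x hx)
  -- integrability and nonnegativity
  have hcont : ContinuousOn (fun x : Fin d → ℝ => φ x - m) A :=
    (φ.continuous.sub continuous_const).continuousOn
  have hInt : IntegrableOn (fun x : Fin d → ℝ => φ x - m) A volume :=
    hcont.integrableOn_compact hcomp
  have hnn : 0 ≤ᵐ[volume.restrict A] fun x : Fin d → ℝ => φ x - m := by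
    filter_upwards [ae_restrict_mem hAm] with x hx
    exact sub_nonneg.2 (hble x hx)
  have hIntnn : 0 ≤ ∫ x in A, (φ x - m) :=
    setIntegral_nonneg hAm fun x hx => sub_nonneg.2 (hble x hx)
  set w := M - m with hw
  rcases le_or_gt w 0 with hw0 | hw0
  · have : (volume A).toReal * (w / ((d : ℝ) + 1)) ≤ 0 := by
      apply mul_nonpos_of_nonneg_of_nonpos ENNReal.toReal_nonneg
      apply div_nonpos_of_nonpos_of_nonneg hw0 (by positivity)
    linarith
  -- main case w > 0
  obtain ⟨p, hpA, hpM⟩ : ∃ p ∈ A, φ p = M := by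
    have := himg.sSup_mem himgne
    obtain ⟨p, hp, hp'⟩ := this
    exact ⟨p, hp, hp'⟩
  -- pointwise measure bound
  have hkey : ∀ t ∈ Ioo (0:ℝ) w,
      ENNReal.ofReal (((w - t)/w) ^ d) * volume A
        ≤ (volume.restrict A) {a : Fin d → ℝ | t < φ a - m} := by
    intro t ht
    set r := (w - t) / w with hr
    have hr0 : 0 ≤ r := div_nonneg (by linarith [ht.2]) hw0.le
    have hr1 : r ≤ 1 := by
      rw [div_le_one hw0]; linarith [ht.1]
    have hsub : (AffineMap.homothety p r) '' A ⊆
        ({a : Fin d → ℝ | t < φ a - m} ∩ A) ∪ {a : Fin d → ℝ | φ a = m + t} := by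
      rintro _ ⟨x, hx, rfl⟩
      have hxA : AffineMap.homothety p r x ∈ A := by
        have : AffineMap.homothety p r x = r • x + (1 - r) • p := by
          simp [AffineMap.homothety_apply]
          module
        rw [this]
        exact hconv hx hpA hr0 (by linarith) (by ring)
      have hφ : m + t ≤ φ (AffineMap.homothety p r x) := by
        have hval : φ (AffineMap.homothety p r x) = r * (φ x - M) + M := by
          simp [AffineMap.homothety_apply, hpM, map_sub, mul_comm]
        rw [hval]
        have h1 : r * (φ x - M) ≥ r * (m - M) :=
          mul_le_mul_of_nonneg_left (by linarith [hble x hx]) hr0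
        have hmw : m - M = -w := by rw [hw]; ring
        have : r * (m - M) = -(w - t) := by
          rw [hr, hmw]
          field_simp
        nlinarith
      rcases lt_or_eq_of_le hφ with h | h
      · exact Or.inl ⟨by simp only [mem_setOf_eq]; linarith, hxA⟩
      · exact Or.inr h.symm
    have hvol_img : volume ((AffineMap.homothety p r) '' A)
        = ENNReal.ofReal (((w - t)/w) ^ d) * volume A := by
      rw [Measure.addHaar_image_homothety]
      congr 2
      rw [abs_of_nonneg (by positivity)]
      congr 1
      simp [Module.finrank_fin_fun]
    calc ENNReal.ofReal (((w - t)/w) ^ d) * volume A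
        = volume ((AffineMap.homothety p r) '' A) := hvol_img.symm
      _ ≤ volume (({a : Fin d → ℝ | t < φ a - m} ∩ A) ∪ {a : Fin d → ℝ | φ a = m + t}) :=
          measure_mono hsub
      _ ≤ volume ({a : Fin d → ℝ | t < φ a - m} ∩ A) + volume {a : Fin d → ℝ | φ a = m + t} :=
          measure_union_le _ _
      _ = volume ({a : Fin d → ℝ | t < φ a - m} ∩ A) := by rw [hnull (m + t), add_zero]
      _ = (volume.restrict A) {a : Fin d → ℝ | t < φ a - m} := by
          rw [Measure.restrict_apply]
          exact measurableSet_lt measurable_const (φ.continuous.measurable.sub measurable_const)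
  -- layer cake chain
  have hlayer : ∫⁻ x in A, ENNReal.ofReal (φ x - m) ∂volume
      = ∫⁻ t in Ioi (0:ℝ), (volume.restrict A) {a : Fin d → ℝ | t < φ a - m} :=
    lintegral_eq_lintegral_meas_lt _ hnn hInt.aemeasurable
  have hchain : ENNReal.ofReal (∫ t in Ioo (0:ℝ) w, ((w - t)/w) ^ d * (volume A).toReal)
      ≤ ENNReal.ofReal (∫ x in A, (φ x - m)) := by
    have h1 : ENNReal.ofReal (∫ t in Ioo (0:ℝ) w, ((w - t)/w) ^ d * (volume A).toReal)
        = ∫⁻ t in Ioo (0:ℝ) w, ENNReal.ofReal (((w - t)/w) ^ d * (volume A).toReal) := by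
      apply ofReal_integral_eq_lintegral_ofReal
      · exact (ContinuousOn.integrableOn_compact (isCompact_Icc (a := (0:ℝ)) (b := w))
          (by fun_prop)).mono_set Ioo_subset_Icc_self
      · filter_upwards [ae_restrict_mem measurableSet_Ioo] with t ht
        have : 0 ≤ (w - t)/w := div_nonneg (by linarith [ht.2]) hw0.le
        positivity
    have h2 : ∫⁻ t in Ioo (0:ℝ) w, ENNReal.ofReal (((w - t)/w) ^ d * (volume A).toReal)
        ≤ ∫⁻ t in Ioo (0:ℝ) w, (volume.restrict A) {a : Fin d → ℝ | t < φ a - m} := by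
      apply setLIntegral_mono' measurableSet_Ioo
      intro t ht
      refine le_trans (le_of_eq ?_) (hkey t ht)
      rw [ENNReal.ofReal_mul (by have : 0 ≤ (w - t)/w := div_nonneg (by linarith [ht.2]) hw0.le; positivity)]
      rw [ENNReal.ofReal_toReal hfin.ne]
    have h3 : ∫⁻ t in Ioo (0:ℝ) w, (volume.restrict A) {a : Fin d → ℝ | t < φ a - m}
        ≤ ∫⁻ t in Ioi (0:ℝ), (volume.restrict A) {a : Fin d → ℝ | t < φ a - m} :=
      lintegral_mono_set (fun t ht => ht.1)
    have h4 : ∫⁻ x in A, ENNReal.ofReal (φ x - m) ∂volume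
        = ENNReal.ofReal (∫ x in A, (φ x - m)) :=
      (ofReal_integral_eq_lintegral_ofReal hInt hnn).symm
    calc ENNReal.ofReal _ = _ := h1
      _ ≤ _ := h2
      _ ≤ _ := h3
      _ = _ := hlayer.symm
      _ = _ := h4
  have hreal : ∫ t in Ioo (0:ℝ) w, ((w - t)/w) ^ d * (volume A).toReal
      ≤ ∫ x in A, (φ x - m) :=
    (ENNReal.ofReal_le_ofReal_iff hIntnn).mp hchain
  -- compute the left integral
  have hcomp_int : ∫ t in Ioo (0:ℝ) w, ((w - t)/w) ^ d * (volume A).toReal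
      = (volume A).toReal * (w / ((d : ℝ) + 1)) := by
    rw [← integral_Ioc_eq_integral_Ioo, ← intervalIntegral.integral_of_le hw0.le]
    have : ∀ t : ℝ, ((w - t)/w) ^ d * (volume A).toReal
        = ((volume A).toReal / w ^ d) * (w - t) ^ d := by
      intro t; rw [div_pow]; ring
    simp_rw [this]
    rw [intervalIntegral.integral_const_mul]
    have hc : (∫ t in (0:ℝ)..w, (w - t) ^ d) = ∫ t in (0:ℝ)..w, t ^ d := by
      rw [intervalIntegral.integral_comp_sub_left (fun t => t ^ d) w]
      simp
    rw [hc, integral_pow]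
    have hwd : w ^ d ≠ 0 := pow_ne_zero _ hw0.ne'
    field_simp
    ring
  linarith [hreal, hcomp_int ▸ hreal]

lemma hyperplane_null (d : ℕ) (j : Fin d) (c : ℝ) :
    volume {x : Fin d → ℝ | x j = c} = 0 := by
  have : {x : Fin d → ℝ | x j = c}
      = Set.pi Set.univ (Function.update (fun _ => (Set.univ : Set ℝ)) j {c}) := by
    ext x
    simp only [Set.mem_setOf_eq, Set.mem_pi, Set.mem_univ, forall_true_left]
    constructor
    · intro h i
      rcases eq_or_ne i j with rfl | hij
      · simp [h]
      · simp [Function.update_of_ne hij]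
    · intro h
      have := h j
      simpa using this
  rw [this, volume_pi_pi]
  exact Finset.prod_eq_zero (Finset.mem_univ j) (by simp)

theorem centroid_safeness_of_convex_body
    (d : ℕ) (A : Set (Fin d → ℝ))
    (hcomp : IsCompact A) (hconv : Convex ℝ A) (hvol : 0 < volume A)
    (j : Fin d) :
    (1 / ((d : ℝ) + 1)) * sSup ((fun x => x j) '' A) +
        ((d : ℝ) / ((d : ℝ) + 1)) * sInf ((fun x => x j) '' A) ≤
      (∫ x in A, x j) / (volume A).toReal ∧
    (∫ x in A, x j) / (volume A).toReal ≤
      (1 / ((d : ℝ) + 1)) * sInf ((fun x => x j) '' A) +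
        ((d : ℝ) / ((d : ℝ) + 1)) * sSup ((fun x => x j) '' A) := by
  have hne : A.Nonempty := by
    rcases A.eq_empty_or_nonempty with rfl | h
    · simp at hvol
    · exact h
  have hAm : MeasurableSet A := hcomp.isClosed.measurableSet
  have hfin : volume A < ⊤ := hcomp.measure_lt_top
  set vA := (volume A).toReal with hvA
  have vApos : 0 < vA := ENNReal.toReal_pos hvol.ne' hfin.ne
  set B := (fun x : Fin d → ℝ => x j) '' A with hB
  set m := sInf B with hm
  set M := sSup B with hM
  set I := ∫ x in A, x j with hI
  set φ : (Fin d → ℝ) →L[ℝ] ℝ := ContinuousLinearMap.proj j with hφ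
  have hφA : ⇑φ '' A = B := rfl
  have hφnA : ⇑(-φ) '' A = -B := by
    ext y
    simp only [Set.mem_image, Set.mem_neg, hB, ContinuousLinearMap.neg_apply, hφ,
      ContinuousLinearMap.proj_apply]
    constructor
    · rintro ⟨x, hx, rfl⟩; exact ⟨x, hx, by ring⟩
    · rintro ⟨x, hx, hxy⟩; exact ⟨x, hx, by linarith⟩
  have hnB : sInf (-B) = -M ∧ sSup (-B) = -m := by
    constructor
    · rw [Real.sInf_def, neg_neg]
    · rw [hm, Real.sInf_def, neg_neg]
  -- integrability
  have hI1 : IntegrableOn (fun x : Fin d → ℝ => x j) A volume :=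
    (continuous_apply j).continuousOn.integrableOn_compact hcomp
  have hI2 : ∀ c : ℝ, IntegrableOn (fun _ : Fin d → ℝ => c) A volume :=
    fun c => integrableOn_const hfin.ne
  have hD : (0:ℝ) < (d : ℝ) + 1 := by positivity
  -- lower bound
  have key1 := key_centroid d A hcomp hconv hne φ (fun c => by
    have : {x : Fin d → ℝ | φ x = c} = {x : Fin d → ℝ | x j = c} := rfl
    rw [this]; exact hyperplane_null d j c)
  rw [hφA, ← hm, ← hM] at key1
  have hsplit1 : ∫ x in A, (φ x - m) = I - m * vA := by
    have : ∫ x in A, (φ x - m) = (∫ x in A, x j) - ∫ x in A, (m : ℝ) := by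
      exact integral_sub hI1 (hI2 m)
    rw [this, setIntegral_const, smul_eq_mul, measureReal_def]
    ring
  rw [hsplit1] at key1
  -- upper bound
  have key2 := key_centroid d A hcomp hconv hne (-φ) (fun c => by
    have : {x : Fin d → ℝ | (-φ) x = c} = {x : Fin d → ℝ | x j = -c} := by
      ext x
      simp only [Set.mem_setOf_eq, ContinuousLinearMap.neg_apply, hφ,
        ContinuousLinearMap.proj_apply]
      constructor <;> intro h <;> linarith
    rw [this]; exact hyperplane_null d j (-c))
  rw [hφnA, hnB.1, hnB.2] at key2
  have hsplit2 : ∫ x in A, ((-φ) x - (-M)) = M * vA - I := by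
    have h1 : ∫ x in A, ((-φ) x - (-M)) = ∫ x in A, ((M : ℝ) - x j) := by
      apply setIntegral_congr_fun hAm
      intro x hx
      simp only [ContinuousLinearMap.neg_apply, hφ, ContinuousLinearMap.proj_apply]
      ring
    rw [h1, integral_sub (hI2 M) hI1, setIntegral_const, smul_eq_mul, measureReal_def]
    ring
  rw [hsplit2] at key2
  have hsimp2 : (-m - -M) = M - m := by ring
  rw [hsimp2] at key2
  constructor
  · rw [le_div_iff₀ vApos]
    have : (1 / ((d : ℝ) + 1) * M + (d : ℝ) / ((d : ℝ) + 1) * m) * vA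
        = vA * ((M - m) / ((d : ℝ) + 1)) + m * vA := by
      field_simp
      ring
    rw [this]
    linarith
  · rw [div_le_iff₀ vApos]
    have : (1 / ((d : ℝ) + 1) * m + (d : ℝ) / ((d : ℝ) + 1) * M) * vA
        = M * vA - vA * ((M - m) / ((d : ℝ) + 1)) := by
      field_simp
      ring
    rw [this]
    linarith
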